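/- (Stability of log-barrier FTRL on the simplex.) Let d ≥ 2, η > 0, t ≥ 1, and let r₁,…,r_t ∈ Δ([d]). Let x_t be the unique minimizer over Δ([d]) of x ↦ η^{-1}R(x) + Σ_{s=1}^{t−1} f(x; r_s) (which lies in the relative interior of Δ([d])), and for λ ∈ [0,1] let x^λ be the unique minimizer over Δ([d]) of x ↦ η^{-1}R(x) + Σ_{s=1}^{t−1} f(x; r_s) + f(x; r_t) − (1−λ)⟨x, ∇f(x_t; r_t)⟩, where ∇f(x;r) = −r/⟨x,r⟩. Then for every coordinate i ∈ {1,…,d}: x^λ_i ≤ (1+η)·x_{t,i}; i.e. min_i x_{t,i}/x^λ_i ≥ 1/(1+η). -/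

import Mathlib

lemma deriv_nonneg_of_min (f : ℝ → ℝ) (m : ℝ) (hf : HasDerivAt f m 0)
    (hmin : ∀ θ ∈ Set.Icc (0:ℝ) 1, f 0 ≤ f θ) : 0 ≤ m := by
  have h := (hf.hasDerivWithinAt (s := Set.Ioi 0))
  rw [hasDerivWithinAt_iff_tendsto_slope] at h
  have hs : Set.Ioi (0:ℝ) \ {0} = Set.Ioi 0 :=
    Set.diff_singleton_eq_self (by simp)
  rw [hs] at h
  refine ge_of_tendsto h ?_
  filter_upwards [Ioc_mem_nhdsGT_of_mem (Set.mem_Ico.mpr ⟨le_refl (0:ℝ), zero_lt_one⟩)] with θ hθ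
  have h0 : f 0 ≤ f θ := hmin θ ⟨hθ.1.le, hθ.2⟩
  have h2 : (0:ℝ) ≤ (f θ - f 0) / θ := div_nonneg (by linarith) hθ.1.le
  simpa [slope, div_eq_inv_mul] using h2

lemma deriv_nonpos_of_min (f : ℝ → ℝ) (m : ℝ) (hf : HasDerivAt f m 1)
    (hmin : ∀ θ ∈ Set.Icc (0:ℝ) 1, f 1 ≤ f θ) : m ≤ 0 := by
  have h1 : HasDerivAt (fun θ : ℝ => 1 - θ) (-1) 0 := by
    simpa using (hasDerivAt_id (0:ℝ)).const_sub 1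
  have hf' : HasDerivAt f m ((fun θ : ℝ => 1 - θ) 0) := by simpa using hf
  have hg : HasDerivAt (fun θ : ℝ => f (1 - θ)) (-m) 0 := by
    exact (hf'.comp 0 h1).congr_deriv (by ring)
  have := deriv_nonneg_of_min _ _ hg (by
    intro θ hθ
    have h3 : (1:ℝ) - θ ∈ Set.Icc (0:ℝ) 1 := ⟨by linarith [hθ.2], by linarith [hθ.1]⟩
    simpa using hmin _ h3)
  linarith

lemma hasDerivAt_log_affine (p q θ : ℝ) (h : p + θ * q ≠ 0) :
    HasDerivAt (fun θ : ℝ => Real.log (p + θ * q)) (q / (p + θ * q)) θ := by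
  have h1 : HasDerivAt (fun θ : ℝ => p + θ * q) q θ := by
    simpa using ((hasDerivAt_id θ).mul_const q).const_add p
  simpa using h1.log h

set_option maxHeartbeats 400000 in
/-- Stability of log-barrier FTRL on the simplex. Let `d ≥ 2`, `η > 0`,
`t ≥ 1`, returns `r₁,…,r_t ∈ Δ([d])`. Let `x_t` be the minimizer over (the relative
interior of) `Δ([d])` of `x ↦ η⁻¹R(x) + Σ_{s=1}^{t−1} f(x; r_s)` with
`R(x) = −Σᵢ log xᵢ` and `f(x;r) = −log⟨x,r⟩`, and for `λ ∈ [0,1]` let `x^λ` be the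
minimizer of the same objective with the additional terms
`f(x; r_t) − (1−λ)⟨x, ∇f(x_t; r_t)⟩`, where `∇f(x;r) = −r/⟨x,r⟩` (so the linear term is
`+(1−λ)⟨x, r_t⟩/⟨x_t, r_t⟩`). Then `x^λ_i ≤ (1+η)·x_{t,i}` for every coordinate `i`. -/
theorem stmt16 (d : ℕ) (hd : 2 ≤ d) (η : ℝ) (hη : 0 < η) (t : ℕ) (ht : 1 ≤ t)
    (r : ℕ → Fin d → ℝ)
    (hr : ∀ s, 1 ≤ s → s ≤ t → (∀ i, 0 ≤ r s i) ∧ ∑ i, r s i = 1)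
    (lam : ℝ) (hlam0 : 0 ≤ lam) (hlam1 : lam ≤ 1)
    (xt xl : Fin d → ℝ)
    (hxt_pos : ∀ i, 0 < xt i) (hxt_sum : ∑ i, xt i = 1)
    (hxl_pos : ∀ i, 0 < xl i) (hxl_sum : ∑ i, xl i = 1)
    (hxt_min : ∀ y : Fin d → ℝ, (∀ i, 0 < y i) → ∑ i, y i = 1 →
      η⁻¹ * (-∑ i, Real.log (xt i)) +
          ∑ s ∈ Finset.Icc 1 (t - 1), -Real.log (∑ i, xt i * r s i) ≤
        η⁻¹ * (-∑ i, Real.log (y i)) +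
          ∑ s ∈ Finset.Icc 1 (t - 1), -Real.log (∑ i, y i * r s i))
    (hxl_min : ∀ y : Fin d → ℝ, (∀ i, 0 < y i) → ∑ i, y i = 1 →
      η⁻¹ * (-∑ i, Real.log (xl i)) +
          ∑ s ∈ Finset.Icc 1 (t - 1), -Real.log (∑ i, xl i * r s i) +
          -Real.log (∑ i, xl i * r t i) +
          (1 - lam) * (∑ i, xl i * r t i) / (∑ i, xt i * r t i) ≤
        η⁻¹ * (-∑ i, Real.log (y i)) +
          ∑ s ∈ Finset.Icc 1 (t - 1), -Real.log (∑ i, y i * r s i) +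
          -Real.log (∑ i, y i * r t i) +
          (1 - lam) * (∑ i, y i * r t i) / (∑ i, xt i * r t i)) :
    ∀ i, xl i ≤ (1 + η) * xt i := by
  have hd0 : 0 < d := by omega
  -- positivity of inner products
  have hSpos : ∀ (x : Fin d → ℝ), (∀ i, 0 < x i) → ∀ s, 1 ≤ s → s ≤ t →
      0 < ∑ i, x i * r s i := by
    intro x hx s hs1 hs2
    obtain ⟨hr0, hr1⟩ := hr s hs1 hs2
    have hex : ∃ j, 0 < r s j := by
      by_contra h
      push_neg at h
      have : ∑ i, r s i ≤ 0 := Finset.sum_nonpos (fun i _ => h i)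
      linarith
    obtain ⟨j, hj⟩ := hex
    exact Finset.sum_pos' (fun i _ => mul_nonneg (hx i).le (hr0 i))
      ⟨j, Finset.mem_univ j, mul_pos (hx j) hj⟩
  have hstle : ∀ s ∈ Finset.Icc 1 (t-1), 1 ≤ s ∧ s ≤ t := by
    intro s hs
    have := Finset.mem_Icc.mp hs
    exact ⟨this.1, le_trans this.2 (Nat.sub_le t 1)⟩
  have hapos : 0 < ∑ i, xt i * r t i := hSpos xt hxt_pos t ht le_rfl
  have hbpos : 0 < ∑ i, xl i * r t i := hSpos xl hxl_pos t ht le_rfl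
  have hγpos : ∀ θ ∈ Set.Icc (0:ℝ) 1, ∀ i, 0 < xt i + θ * (xl i - xt i) := by
    intro θ hθ i
    rcases eq_or_lt_of_le hθ.1 with h | h
    · simp [← h, hxt_pos i]
    · nlinarith [mul_nonneg (sub_nonneg.mpr hθ.2) (hxt_pos i).le, mul_pos h (hxl_pos i)]
  have hγsum : ∀ θ : ℝ, ∑ i, (xt i + θ * (xl i - xt i)) = 1 := by
    intro θ
    rw [Finset.sum_add_distrib, ← Finset.mul_sum, Finset.sum_sub_distrib, hxt_sum, hxl_sum]
    ring
  have hlin : ∀ (s : ℕ) (θ : ℝ), ∑ i, (xt i + θ * (xl i - xt i)) * r s i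
      = (∑ i, xt i * r s i) + θ * ((∑ i, xl i * r s i) - ∑ i, xt i * r s i) := by
    intro s θ
    rw [Finset.sum_congr rfl (fun i _ => show (xt i + θ * (xl i - xt i)) * r s i
        = xt i * r s i + θ * (xl i * r s i - xt i * r s i) from by ring)]
    rw [Finset.sum_add_distrib, ← Finset.mul_sum, Finset.sum_sub_distrib]
  set φ : ℝ → ℝ := fun θ => η⁻¹ * (-∑ i, Real.log (xt i + θ * (xl i - xt i))) +
      ∑ s ∈ Finset.Icc 1 (t-1), -Real.log (∑ i, (xt i + θ * (xl i - xt i)) * r s i)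
    with hφdef
  set ψ : ℝ → ℝ := fun θ => φ θ +
      -Real.log (∑ i, (xt i + θ * (xl i - xt i)) * r t i) +
      (1 - lam) * (∑ i, (xt i + θ * (xl i - xt i)) * r t i) / (∑ i, xt i * r t i)
    with hψdef
  have hφmin : ∀ θ ∈ Set.Icc (0:ℝ) 1, φ 0 ≤ φ θ := by
    intro θ hθ
    have h := hxt_min (fun i => xt i + θ * (xl i - xt i)) (hγpos θ hθ) (hγsum θ)
    simpa [hφdef] using h
  have hone : ∀ x y : ℝ, x + 1 * (y - x) = y := fun x y => by ring
  have hψmin : ∀ θ ∈ Set.Icc (0:ℝ) 1, ψ 1 ≤ ψ θ := by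
    intro θ hθ
    have h := hxl_min (fun i => xt i + θ * (xl i - xt i)) (hγpos θ hθ) (hγsum θ)
    simpa [hψdef, hφdef, hone] using h
  have hderivφ : ∀ θ0 : ℝ, (∀ i, xt i + θ0 * (xl i - xt i) ≠ 0) →
      (∀ s ∈ Finset.Icc 1 (t-1),
        (∑ i, xt i * r s i) + θ0 * ((∑ i, xl i * r s i) - ∑ i, xt i * r s i) ≠ 0) →
      HasDerivAt φ
        (η⁻¹ * (-∑ i, (xl i - xt i) / (xt i + θ0 * (xl i - xt i))) +
          ∑ s ∈ Finset.Icc 1 (t-1),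
            -(((∑ i, xl i * r s i) - ∑ i, xt i * r s i) /
              ((∑ i, xt i * r s i) + θ0 * ((∑ i, xl i * r s i) - ∑ i, xt i * r s i)))) θ0 := by
    intro θ0 h1 h2
    rw [hφdef]
    simp only [hlin]
    refine HasDerivAt.add ?_ ?_
    · exact HasDerivAt.const_mul _ (HasDerivAt.neg
        (HasDerivAt.fun_sum (fun i _ => hasDerivAt_log_affine _ _ _ (h1 i))))
    · exact HasDerivAt.fun_sum (fun s hs => (hasDerivAt_log_affine _ _ _ (h2 s hs)).neg)
  have hderivψ : ∀ θ0 : ℝ, (∀ i, xt i + θ0 * (xl i - xt i) ≠ 0) →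
      (∀ s ∈ Finset.Icc 1 (t-1),
        (∑ i, xt i * r s i) + θ0 * ((∑ i, xl i * r s i) - ∑ i, xt i * r s i) ≠ 0) →
      ((∑ i, xt i * r t i) + θ0 * ((∑ i, xl i * r t i) - ∑ i, xt i * r t i) ≠ 0) →
      HasDerivAt ψ
        ((η⁻¹ * (-∑ i, (xl i - xt i) / (xt i + θ0 * (xl i - xt i))) +
          ∑ s ∈ Finset.Icc 1 (t-1),
            -(((∑ i, xl i * r s i) - ∑ i, xt i * r s i) /
              ((∑ i, xt i * r s i) + θ0 * ((∑ i, xl i * r s i) - ∑ i, xt i * r s i)))) +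
          -(((∑ i, xl i * r t i) - ∑ i, xt i * r t i) /
            ((∑ i, xt i * r t i) + θ0 * ((∑ i, xl i * r t i) - ∑ i, xt i * r t i))) +
          (1 - lam) * ((∑ i, xl i * r t i) - ∑ i, xt i * r t i) / (∑ i, xt i * r t i)) θ0 := by
    intro θ0 h1 h2 h3
    rw [hψdef]
    simp only [hlin]
    refine HasDerivAt.add (HasDerivAt.add ?_ ?_) ?_
    · exact hderivφ θ0 h1 h2
    · exact (hasDerivAt_log_affine _ _ _ h3).neg
    · have hl : HasDerivAt (fun θ : ℝ => (∑ i, xt i * r t i) +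
          θ * ((∑ i, xl i * r t i) - ∑ i, xt i * r t i))
          ((∑ i, xl i * r t i) - ∑ i, xt i * r t i) θ0 := by
        simpa using ((hasDerivAt_id θ0).mul_const _).const_add (∑ i, xt i * r t i)
      exact (hl.const_mul (1 - lam)).div_const _
  -- derivative sign conditions
  have hD0 : 0 ≤ η⁻¹ * (-∑ i, (xl i - xt i) / xt i) +
      ∑ s ∈ Finset.Icc 1 (t-1),
        -(((∑ i, xl i * r s i) - ∑ i, xt i * r s i) / (∑ i, xt i * r s i)) := by
    have h := deriv_nonneg_of_min φ _
      (hderivφ 0 (fun i => by simpa using (hxt_pos i).ne')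
        (fun s hs => by simpa using (hSpos xt hxt_pos s (hstle s hs).1 (hstle s hs).2).ne'))
      hφmin
    simpa using h
  have hD1 : η⁻¹ * (-∑ i, (xl i - xt i) / xl i) +
      (∑ s ∈ Finset.Icc 1 (t-1),
        -(((∑ i, xl i * r s i) - ∑ i, xt i * r s i) / (∑ i, xl i * r s i))) +
      -(((∑ i, xl i * r t i) - ∑ i, xt i * r t i) / (∑ i, xl i * r t i)) +
      (1 - lam) * ((∑ i, xl i * r t i) - ∑ i, xt i * r t i) / (∑ i, xt i * r t i) ≤ 0 := by
    have h := deriv_nonpos_of_min ψ _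
      (hderivψ 1 (fun i => by rw [hone]; exact (hxl_pos i).ne')
        (fun s hs => by
          rw [hone]
          exact (hSpos xl hxl_pos s (hstle s hs).1 (hstle s hs).2).ne')
        (by rw [hone]; exact hbpos.ne'))
      hψmin
    simpa only [hone] using h
  -- key inequality
  have hterm : ∑ i, ((xl i - xt i)^2 / (xt i * xl i)) =
      (∑ i, (xl i - xt i) / xt i) - ∑ i, (xl i - xt i) / xl i := by
    rw [← Finset.sum_sub_distrib]
    refine Finset.sum_congr rfl (fun i _ => ?_)
    have h1 := (hxt_pos i).ne'
    have h2 := (hxl_pos i).ne'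
    field_simp
  have hXX : η⁻¹ * ∑ i, ((xl i - xt i)^2 / (xt i * xl i)) =
      η⁻¹ * (-∑ i, (xl i - xt i) / xl i) - η⁻¹ * (-∑ i, (xl i - xt i) / xt i) := by
    rw [hterm]; ring
  have hsum2 : (∑ s ∈ Finset.Icc 1 (t-1),
        -(((∑ i, xl i * r s i) - ∑ i, xt i * r s i) / (∑ i, xl i * r s i))) -
      (∑ s ∈ Finset.Icc 1 (t-1),
        -(((∑ i, xl i * r s i) - ∑ i, xt i * r s i) / (∑ i, xt i * r s i))) ≥ 0 := by
    rw [← Finset.sum_sub_distrib]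
    refine Finset.sum_nonneg (fun s hs => ?_)
    have hA := hSpos xt hxt_pos s (hstle s hs).1 (hstle s hs).2
    have hB := hSpos xl hxl_pos s (hstle s hs).1 (hstle s hs).2
    have heq : -(((∑ i, xl i * r s i) - ∑ i, xt i * r s i) / (∑ i, xl i * r s i)) -
        -(((∑ i, xl i * r s i) - ∑ i, xt i * r s i) / (∑ i, xt i * r s i)) =
        ((∑ i, xl i * r s i) - ∑ i, xt i * r s i)^2 /
          ((∑ i, xt i * r s i) * (∑ i, xl i * r s i)) := by
      field_simp
      ring
    rw [heq]
    exact div_nonneg (sq_nonneg _) (mul_nonneg hA.le hB.le)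
  have hfin : η⁻¹ * ∑ i, ((xl i - xt i)^2 / (xt i * xl i)) ≤
      ((∑ i, xl i * r t i) - ∑ i, xt i * r t i) / (∑ i, xl i * r t i) -
      (1 - lam) * ((∑ i, xl i * r t i) - ∑ i, xt i * r t i) / (∑ i, xt i * r t i) := by
    linarith [hD0, hD1, hXX, hsum2]
  -- max-ratio coordinate
  obtain ⟨i0, -, hmax⟩ := Finset.exists_max_image Finset.univ (fun i => xl i / xt i)
    ⟨⟨0, hd0⟩, Finset.mem_univ _⟩
  set c := xl i0 / xt i0 with hcdef
  have hc0 : 0 < c := div_pos (hxl_pos i0) (hxt_pos i0)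
  have hcxl : xl i0 = c * xt i0 := by
    rw [hcdef, div_mul_cancel₀ _ (hxt_pos i0).ne']
  have hc_bound : ∀ i, xl i ≤ c * xt i := by
    intro i
    exact (div_le_iff₀ (hxt_pos i)).mp (hmax i (Finset.mem_univ i))
  suffices hc : c ≤ 1 + η by
    intro i
    calc xl i ≤ c * xt i := hc_bound i
    _ ≤ (1 + η) * xt i := mul_le_mul_of_nonneg_right hc (hxt_pos i).le
  by_contra hcon
  push_neg at hcon
  have hc1 : 1 < c := by linarith
  have hble : (∑ i, xl i * r t i) ≤ c * ∑ i, xt i * r t i := by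
    rw [Finset.mul_sum]
    refine Finset.sum_le_sum (fun i _ => ?_)
    rw [← mul_assoc]
    exact mul_le_mul_of_nonneg_right (hc_bound i) ((hr t ht le_rfl).1 i)
  have hsingle : (xl i0 - xt i0)^2 / (xt i0 * xl i0) ≤
      ∑ i, ((xl i - xt i)^2 / (xt i * xl i)) :=
    Finset.single_le_sum (f := fun i => (xl i - xt i)^2 / (xt i * xl i)) (fun i _ => div_nonneg (sq_nonneg _)
      (mul_nonneg (hxt_pos i).le (hxl_pos i).le)) (Finset.mem_univ i0)
  have hval : (xl i0 - xt i0)^2 / (xt i0 * xl i0) = (c - 1)^2 / c := by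
    rw [hcxl]
    have h1 := (hxt_pos i0).ne'
    have h2 := hc0.ne'
    field_simp
  have hKb : ((∑ i, xl i * r t i) - ∑ i, xt i * r t i) / (∑ i, xl i * r t i) -
      (1 - lam) * ((∑ i, xl i * r t i) - ∑ i, xt i * r t i) / (∑ i, xt i * r t i) ≤
      (c - 1) / c := by
    rcases le_or_gt (∑ i, xl i * r t i) (∑ i, xt i * r t i) with hBA | hAB
    · have h1 : ((∑ i, xl i * r t i) - ∑ i, xt i * r t i) / (∑ i, xl i * r t i) -
          (1 - lam) * ((∑ i, xl i * r t i) - ∑ i, xt i * r t i) / (∑ i, xt i * r t i) =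
          ((∑ i, xl i * r t i) - ∑ i, xt i * r t i) *
            (1 / (∑ i, xl i * r t i) - (1 - lam) / (∑ i, xt i * r t i)) := by ring
      have h2 : (1 - lam) / (∑ i, xt i * r t i) ≤ 1 / (∑ i, xl i * r t i) :=
        div_le_div₀ zero_le_one (by linarith) hbpos hBA
      rw [h1]
      have h3 : ((∑ i, xl i * r t i) - ∑ i, xt i * r t i) *
          (1 / (∑ i, xl i * r t i) - (1 - lam) / (∑ i, xt i * r t i)) ≤ 0 :=
        mul_nonpos_of_nonpos_of_nonneg (by linarith) (by linarith)
      have h4 : (0:ℝ) ≤ (c - 1) / c := div_nonneg (by linarith) hc0.le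
      linarith
    · have h2 : 0 ≤ (1 - lam) * ((∑ i, xl i * r t i) - ∑ i, xt i * r t i) /
          (∑ i, xt i * r t i) :=
        div_nonneg (mul_nonneg (by linarith) (by linarith)) hapos.le
      have h3 : ((∑ i, xl i * r t i) - ∑ i, xt i * r t i) / (∑ i, xl i * r t i) ≤
          (c - 1) / c := by
        rw [div_le_div_iff₀ hbpos hc0]
        nlinarith [hble]
      linarith
  have hm1 : η⁻¹ * ((c - 1)^2 / c) ≤ (c - 1) / c := by
    calc η⁻¹ * ((c - 1)^2 / c) = η⁻¹ * ((xl i0 - xt i0)^2 / (xt i0 * xl i0)) := by rw [hval]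
    _ ≤ η⁻¹ * ∑ i, ((xl i - xt i)^2 / (xt i * xl i)) :=
        mul_le_mul_of_nonneg_left hsingle (inv_nonneg.mpr hη.le)
    _ ≤ _ := le_trans hfin hKb
  have h5 : (c - 1)^2 ≤ η * (c - 1) := by
    have h6 := mul_le_mul_of_nonneg_left hm1 hη.le
    have e1 : η * (η⁻¹ * ((c - 1)^2 / c)) = (c - 1)^2 / c :=
      mul_inv_cancel_left₀ hη.ne' _
    rw [e1] at h6
    have h7 := mul_le_mul_of_nonneg_right h6 hc0.le
    have e2 : (c - 1)^2 / c * c = (c - 1)^2 := div_mul_cancel₀ _ hc0.ne'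
    have e3 : η * ((c - 1) / c) * c = η * (c - 1) := by
      rw [mul_assoc, div_mul_cancel₀ _ hc0.ne']
    rw [e2, e3] at h7
    exact h7
  nlinarith [h5, hcon, hη]
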